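/- Let p be a prime, and let a, b be positive integers with a < p, b < p, and p ≤ a + b. Then in the field F_p, b · C(b-1, p-a-1) = (-1)^(a+1) · (a! · b!) / (a+b-p)!, where C denotes the binomial coefficient and the factorials a!, b!, (a+b-p)! are taken as natural numbers reduced mod p. -/

import Mathlib

theorem binomial_lemma (p a b : ℕ) [Fact p.Prime] (hodd : p ≠ 2)
    (ha0 : 0 < a) (hb0 : 0 < b) (ha : a < p) (hb : b < p) (hab : p ≤ a + b) :
    (b : ZMod p) * (Nat.choose (b - 1) (p - a - 1) : ZMod p) =
      (-1) ^ (a + 1) * ((a.factorial : ZMod p) * (b.factorial : ZMod p)) /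
        ((a + b - p).factorial : ZMod p) := by
  have hp : p.Prime := Fact.out
  have h1 : p - a - 1 ≤ b - 1 := by omega
  have hnat : Nat.choose (b - 1) (p - a - 1) * (p - a - 1).factorial
      * (a + b - p).factorial = (b - 1).factorial := by
    have := Nat.choose_mul_factorial_mul_factorial h1
    rw [show b - 1 - (p - a - 1) = a + b - p by omega] at this
    exact this
  have hfac : (p - 1 - a).factorial * Nat.descFactorial (p - 1) a = (p - 1).factorial :=
    Nat.factorial_mul_descFactorial (by omega)
  have hwil : (((p - 1).factorial : ℕ) : ZMod p) = -1 := ZMod.wilsons_lemma p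
  have hdesc : ((Nat.descFactorial (p - 1) a : ℕ) : ZMod p) = (-1) ^ a * a.factorial :=
    ZMod.cast_descFactorial (by omega)
  have hsq : ((-1 : ZMod p) ^ a) * ((-1 : ZMod p) ^ a) = 1 := by
    rw [← pow_add]; exact Even.neg_one_pow ⟨a, rfl⟩
  have key : ((p - a - 1).factorial : ZMod p) * (a.factorial : ZMod p) = (-1) ^ (a + 1) := by
    have hc := congrArg (fun n : ℕ => (n : ZMod p)) hfac
    simp only [Nat.cast_mul] at hc
    rw [hdesc, hwil] at hc
    rw [show p - a - 1 = p - 1 - a by omega, pow_succ]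
    linear_combination ((-1 : ZMod p) ^ a) * hc
      - (((p - 1 - a).factorial : ZMod p) * (a.factorial : ZMod p)) * hsq
  -- nonvanishing of factorials mod p
  have hfne : ∀ n : ℕ, n < p → ((n.factorial : ℕ) : ZMod p) ≠ 0 := by
    intro n hn h0
    rw [ZMod.natCast_eq_zero_iff] at h0
    exact absurd ((Nat.Prime.dvd_factorial hp).mp h0) (by omega)
  have hA : ((p - a - 1).factorial : ZMod p) ≠ 0 := hfne _ (by omega)
  have hK : (((a + b - p).factorial : ℕ) : ZMod p) ≠ 0 := hfne _ (by omega)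
  have hcast : (Nat.choose (b - 1) (p - a - 1) : ZMod p) * ((p - a - 1).factorial : ZMod p)
      * ((a + b - p).factorial : ZMod p) = ((b - 1).factorial : ZMod p) := by
    exact_mod_cast congrArg (fun n : ℕ => (n : ZMod p)) hnat
  have hbf : (b : ZMod p) * ((b - 1).factorial : ZMod p) = (b.factorial : ZMod p) := by
    exact_mod_cast congrArg (fun n : ℕ => (n : ZMod p)) (Nat.mul_factorial_pred hb0.ne')
  have hsq1 : ((-1 : ZMod p) ^ (a + 1)) * ((-1 : ZMod p) ^ (a + 1)) = 1 := by
    rw [← pow_add]; exact Even.neg_one_pow ⟨a + 1, rfl⟩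
  rw [eq_div_iff hK]
  apply mul_right_cancel₀ hA
  linear_combination (b : ZMod p) * hcast + hbf
    - ((-1 : ZMod p) ^ (a + 1) * (b.factorial : ZMod p)) * key
    - (b.factorial : ZMod p) * hsq1
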